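/- Consider a noncanonical game of 2m+1 rounds (m ≥ 1) on ℂ^n in which player 1 makes the first and the last move. If the action group A of player 1 contains a unitary U such that the state ψ = U e_{q0} is invariant under the action group B of player 2 (i.e. B_i ψ = ψ for every B_i ∈ B), and player 1's target state equals the initial state, e_{qA} = e_{q0}, then player 1 has a strong winning strategy: there exist A_1, …, A_{m+1} ∈ A (namely A_1 = U, A_2 = ⋯ = A_m = I, A_{m+1} = U^{-1}) such that for every choice B_1, …, B_m ∈ B one has A_{m+1} B_m A_m ⋯ B_1 A_1 e_{q0} = e_{q0}. -/

import Mathlib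

/-- The product of the moves in a canonical `2m`-round game, namely
`B_m * A_m * ⋯ * B_1 * A_1`, where player 1 plays `A_1, …, A_m` at odd rounds and
player 2 plays `B_1, …, B_m` at even rounds. -/
noncomputable def canonicalProd {n m : ℕ} (As Bs : Fin m → Matrix (Fin n) (Fin n) ℂ) :
    Matrix (Fin n) (Fin n) ℂ :=
  ((List.ofFn fun i => Bs i * As i).reverse).prod

/-- The product of the moves in a noncanonical `2m+1`-round game, namely
`A_{m+1} * B_m * A_m * ⋯ * B_1 * A_1`, where player 1 makes the first and the
last move. -/
noncomputable def noncanonicalProd {n m : ℕ} (As : Fin (m + 1) → Matrix (Fin n) (Fin n) ℂ)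
    (Bs : Fin m → Matrix (Fin n) (Fin n) ℂ) : Matrix (Fin n) (Fin n) ℂ :=
  As (Fin.last m) * ((List.ofFn fun i : Fin m => Bs i * As i.castSucc).reverse).prod

/-- The underlying matrix of an element of a subgroup of the unitary group. -/
noncomputable def toMat {n : ℕ} {G : Subgroup (Matrix.unitaryGroup (Fin n) ℂ)} (x : G) :
    Matrix (Fin n) (Fin n) ℂ :=
  ((x : Matrix.unitaryGroup (Fin n) ℂ) : Matrix (Fin n) (Fin n) ℂ)

/-- `G` contains (the standard matrix representation of) the symmetric group `S_n`:
every `n × n` permutation matrix belongs to `G`. -/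
def containsSn {n : ℕ} (G : Subgroup (Matrix.unitaryGroup (Fin n) ℂ)) : Prop :=
  ∀ σ : Equiv.Perm (Fin n), ∃ P ∈ G,
    ((P : Matrix.unitaryGroup (Fin n) ℂ) : Matrix (Fin n) (Fin n) ℂ) = σ.permMatrix ℂ


lemma prod_fix_aux {n : ℕ} (ψ : Fin n → ℂ) :
    ∀ l : List (Matrix (Fin n) (Fin n) ℂ), (∀ M ∈ l, M.mulVec ψ = ψ) →
      l.prod.mulVec ψ = ψ := by
  intro l
  induction l with
  | nil => intro _; simp
  | cons a t ih =>
    intro h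
    rw [List.prod_cons, ← Matrix.mulVec_mulVec,
      ih (fun M hM => h M (List.mem_cons_of_mem _ hM)), h a List.mem_cons_self]

/-- Noncanonical game, different action groups: if the action group `A` of player 1
contains a unitary `U` driving the initial state to a state `ψ = U e_{q0}` invariant
under the action group `B` of player 2, and player 1's target state equals the
initial state (`e_{qA} = e_{q0}`), then player 1 has a strong winning strategy. -/
theorem noncanonical_invariant_state_target_initial_sws_player1
    (n m : ℕ) (hn : 2 ≤ n) (hm : 1 ≤ m)
    (A B : Subgroup (Matrix.unitaryGroup (Fin n) ℂ))
    (q0 qA qB : Fin n) (hq : qA ≠ qB) (hqA : qA = q0)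
    (U : Matrix.unitaryGroup (Fin n) ℂ) (hU : U ∈ A)
    (hinv : ∀ Bi ∈ B, ((Bi : Matrix.unitaryGroup (Fin n) ℂ) : Matrix (Fin n) (Fin n) ℂ).mulVec
        ((U : Matrix (Fin n) (Fin n) ℂ).mulVec (Pi.single q0 1))
      = (U : Matrix (Fin n) (Fin n) ℂ).mulVec (Pi.single q0 1)) :
    ∃ As : Fin (m + 1) → A, ∀ Bs : Fin m → B,
      (noncanonicalProd (fun i => toMat (As i)) (fun i => toMat (Bs i))).mulVec
        (Pi.single q0 1) = Pi.single qA 1 := by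
  obtain ⟨k, rfl⟩ : ∃ k, m = k + 1 := ⟨m - 1, (Nat.succ_pred_eq_of_pos hm).symm⟩
  set ψ : Fin n → ℂ := (U : Matrix (Fin n) (Fin n) ℂ).mulVec (Pi.single q0 1) with hψ
  refine ⟨fun i => if i = 0 then ⟨U, hU⟩ else if i = Fin.last (k + 1) then ⟨U, hU⟩⁻¹ else 1,
    fun Bs => ?_⟩
  have hlastne : (Fin.last (k + 1) : Fin (k + 2)) ≠ 0 := by
    simp [Fin.ext_iff]
  have hcast : ∀ i : Fin (k + 1), (i.castSucc : Fin (k + 2)) ≠ Fin.last (k + 1) := fun i =>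
    (Fin.castSucc_lt_last i).ne
  rw [noncanonicalProd]
  simp only []
  rw [if_neg hlastne, if_pos trivial]
  have hofn : (List.ofFn fun i : Fin (k + 1) =>
        toMat (Bs i) * toMat (if (i.castSucc : Fin (k + 2)) = 0 then (⟨U, hU⟩ : A)
          else if i.castSucc = Fin.last (k + 1) then ⟨U, hU⟩⁻¹ else 1))
      = (toMat (Bs 0) * (U : Matrix (Fin n) (Fin n) ℂ)) ::
        List.ofFn (fun j : Fin k => toMat (Bs j.succ)) := by
    rw [List.ofFn_succ]
    congr 1
    refine congrArg List.ofFn (funext fun j => ?_)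
    have h1 : (j.succ.castSucc : Fin (k + 2)) ≠ 0 := by
      simp [Fin.ext_iff]
    have h2 : (j.succ.castSucc : Fin (k + 2)) ≠ Fin.last (k + 1) := hcast _
    show toMat (Bs j.succ) * toMat (if (j.succ.castSucc : Fin (k + 2)) = 0 then (⟨U, hU⟩ : A)
        else if j.succ.castSucc = Fin.last (k + 1) then ⟨U, hU⟩⁻¹ else 1) = toMat (Bs j.succ)
    rw [if_neg h1, if_neg h2]
    simp [toMat]
  rw [hofn]
  rw [List.reverse_cons, List.prod_append, List.prod_singleton]
  rw [← Matrix.mulVec_mulVec, ← Matrix.mulVec_mulVec, ← Matrix.mulVec_mulVec]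
  have hB0 : (toMat (Bs 0)).mulVec ψ = ψ := hinv _ (Bs 0).2
  have htail : ((List.ofFn fun j : Fin k => toMat (Bs j.succ)).reverse).prod.mulVec ψ = ψ := by
    apply prod_fix_aux
    intro M hM
    rw [List.mem_reverse, List.mem_ofFn] at hM
    obtain ⟨j, rfl⟩ := hM
    exact hinv _ (Bs j.succ).2
  rw [← hψ, hB0, htail]
  have : (toMat ((⟨U, hU⟩ : A)⁻¹)).mulVec ψ = Pi.single q0 1 := by
    rw [hψ, Matrix.mulVec_mulVec]
    have : toMat ((⟨U, hU⟩ : A)⁻¹) * (U : Matrix (Fin n) (Fin n) ℂ) = 1 := by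
      simp [toMat]
    rw [this, Matrix.one_mulVec]
  rw [this, hqA]
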